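/- Let H and K be ultrametric normed spaces over a nonarchimedean field, and let {x₁, …, xₙ} be a finite norm-orthogonal system in H. Then for any y₁, …, yₙ ∈ K, the projective norm satisfies ‖Σᵢ xᵢ ⊗ yᵢ‖_π = maxᵢ ‖xᵢ‖·‖yᵢ‖. -/

import Mathlib

open scoped TensorProduct

/-- The ultrametric projective seminorm on the algebraic tensor product:
`‖u‖_π = inf { maxᵢ ‖xᵢ‖·‖yᵢ‖ : u = Σᵢ xᵢ ⊗ yᵢ }`. -/
noncomputable def projNorm {F H K : Type*} [NormedField F]
    [NormedAddCommGroup H] [NormedSpace F H]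
    [NormedAddCommGroup K] [NormedSpace F K] (u : H ⊗[F] K) : ℝ :=
  sInf {r : ℝ | ∃ (n : ℕ) (x : Fin n → H) (y : Fin n → K),
    u = ∑ i, x i ⊗ₜ[F] y i ∧ r = ⨆ i, ‖x i‖ * ‖y i‖}


private lemma bdd {n : ℕ} (f : Fin n → ℝ) : BddAbove (Set.range f) :=
  (Set.finite_range f).bddAbove

private lemma norm_sum_le_iSup {E : Type*} [SeminormedAddCommGroup E] [IsUltrametricDist E]
    {n : ℕ} (f : Fin n → E) : ‖∑ i, f i‖ ≤ ⨆ i, ‖f i‖ := by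
  refine IsUltrametricDist.norm_sum_le_of_forall_le_of_nonneg
    (Real.iSup_nonneg fun i => norm_nonneg _) (fun i _ => le_ciSup (bdd fun j => ‖f j‖) i)

private lemma master {F K : Type*} [NormedField F] [IsUltrametricDist F]
    [NormedAddCommGroup K] [NormedSpace F K] :
    ∀ (m : ℕ) (b : Fin m → K) (d : Fin m → ℝ), (∀ j, 0 < d j) →
    ∀ (y₀ : K), (∀ g : K →ₗ[F] F, ‖g y₀‖ ≤ ⨆ j, d j * ‖g (b j)‖) →
    ∃ β : Fin m → F, y₀ = ∑ j, β j • b j ∧ ∀ j, ‖β j‖ ≤ d j := by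
  intro m
  induction m with
  | zero =>
    intro b d hd y₀ H
    refine ⟨fun j => 0, ?_, fun j => j.elim0⟩
    have hy : y₀ = 0 := by
      rw [← Module.forall_dual_apply_eq_zero_iff F y₀]
      intro g
      have h := H g
      rw [Real.iSup_of_isEmpty] at h
      simpa using le_antisymm h (norm_nonneg _)
    simp [hy]
  | succ m ih =>
    intro b d hd y₀ H
    by_cases hli : LinearIndependent F b
    · -- independent case
      have hy : y₀ ∈ Submodule.span F (Set.range b) := by
        by_contra hy
        rw [← Subspace.forall_mem_dualAnnihilator_apply_eq_zero_iff
          (Submodule.span F (Set.range b)) y₀] at hy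
        push_neg at hy
        obtain ⟨g, hgW, hg⟩ := hy
        rw [Submodule.mem_dualAnnihilator] at hgW
        have hgb : ∀ j, g (b j) = 0 := fun j =>
          hgW _ (Submodule.subset_span (Set.mem_range_self j))
        have h := H g
        simp only [hgb, norm_zero, mul_zero, ciSup_const] at h
        exact hg (by simpa using le_antisymm h (norm_nonneg _))
      obtain ⟨c, hc⟩ := Submodule.mem_span_range_iff_exists_fun F |>.mp hy
      refine ⟨c, hc.symm, fun j => ?_⟩
      set V₀ := Submodule.span F (Set.range b)
      obtain ⟨q, hq⟩ := Submodule.exists_isCompl V₀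
      set bas : Module.Basis (Fin (m+1)) F V₀ := Module.Basis.span hli
      set g : K →ₗ[F] F := (bas.coord j) ∘ₗ (Submodule.linearProjOfIsCompl V₀ q hq) with hgdef
      have hgb : ∀ k, g (b k) = if k = j then 1 else 0 := by
        intro k
        have hbk : b k ∈ V₀ := Submodule.subset_span (Set.mem_range_self k)
        have h1 : (Submodule.linearProjOfIsCompl V₀ q hq) (b k) = ⟨b k, hbk⟩ := by
          have := Submodule.linearProjOfIsCompl_apply_left hq ⟨b k, hbk⟩
          exact this
        have h2 : bas k = (⟨b k, hbk⟩ : V₀) := Module.Basis.span_apply hli k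
        simp only [hgdef, LinearMap.comp_apply, h1, ← h2, Module.Basis.coord_apply, Module.Basis.repr_self]
        simp [Finsupp.single_apply]
      have hgy : g y₀ = c j := by
        rw [← hc, map_sum]
        simp only [map_smul, hgb, smul_eq_mul]
        rw [Finset.sum_eq_single j] <;> simp +contextual
      have h := H g
      rw [hgy] at h
      refine h.trans (Real.iSup_le (fun k => ?_) (hd j).le)
      rw [hgb k]
      rcases eq_or_ne k j with rfl | hne
      · simp
      · simp only [if_neg hne, norm_zero, mul_zero]
        exact (hd j).le
    · -- dependent case
      rw [Fintype.linearIndependent_iff] at hli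
      push_neg at hli
      obtain ⟨γ, hγsum, j₀, hj₀⟩ := hli
      obtain ⟨js, hjs⟩ := Finite.exists_max (fun j => ‖γ j‖ / d j)
      have hγjs : γ js ≠ 0 := by
        intro h0
        have h1 := hjs j₀
        rw [h0] at h1
        simp only [norm_zero, zero_div] at h1
        exact absurd h1 (not_le.mpr (div_pos (norm_pos_iff.mpr hj₀) (hd j₀)))
      have hγpos : 0 < ‖γ js‖ := norm_pos_iff.mpr hγjs
      set b' : Fin m → K := fun i => b (js.succAbove i) with hb'
      set d' : Fin m → ℝ := fun i => d (js.succAbove i) with hd'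
      have hd2 : ∀ i, 0 < d' i := fun i => hd _
      have hrel : γ js • b js + ∑ i, γ (js.succAbove i) • b' i = 0 := by
        rw [Fin.sum_univ_succAbove (fun k => γ k • b k) js] at hγsum
        simpa [hb'] using hγsum
      -- the key estimate for the eliminated coordinate
      have hkey : ∀ g : K →ₗ[F] F, d js * ‖g (b js)‖ ≤ ⨆ i, d' i * ‖g (b' i)‖ := by
        intro g
        have hsum : γ js * g (b js) + ∑ i, γ (js.succAbove i) * g (b' i) = 0 := by
          have := congrArg g hrel
          simpa [map_sum, smul_eq_mul] using this
        have hS : γ js * g (b js) = -∑ i, γ (js.succAbove i) * g (b' i) :=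
          eq_neg_of_add_eq_zero_left hsum
        have hnorm : ‖γ js‖ * ‖g (b js)‖ = ‖∑ i, γ (js.succAbove i) * g (b' i)‖ := by
          rw [← norm_mul, hS, norm_neg]
        have hle : ‖γ js‖ * ‖g (b js)‖ ≤ ⨆ i, ‖γ (js.succAbove i) * g (b' i)‖ := by
          rw [hnorm]
          exact norm_sum_le_iSup _
        calc d js * ‖g (b js)‖
            = (d js * ‖γ js‖⁻¹) * (‖γ js‖ * ‖g (b js)‖) := by field_simp
          _ ≤ (d js * ‖γ js‖⁻¹) * ⨆ i, ‖γ (js.succAbove i) * g (b' i)‖ :=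
              mul_le_mul_of_nonneg_left hle (mul_nonneg (hd js).le (inv_nonneg.mpr (norm_nonneg _)))
          _ = ⨆ i, (d js * ‖γ js‖⁻¹) * ‖γ (js.succAbove i) * g (b' i)‖ :=
              Real.mul_iSup_of_nonneg (mul_nonneg (hd js).le (inv_nonneg.mpr (norm_nonneg _))) _
          _ ≤ ⨆ i, d' i * ‖g (b' i)‖ := by
              refine Real.iSup_le (fun i => ?_)
                (Real.iSup_nonneg fun i => mul_nonneg (hd2 i).le (norm_nonneg _))
              refine le_trans ?_ (le_ciSup (bdd fun i => d' i * ‖g (b' i)‖) i)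
              rw [norm_mul, ← mul_assoc]
              refine mul_le_mul_of_nonneg_right ?_ (norm_nonneg _)
              have hmax := hjs (js.succAbove i)
              rw [div_le_div_iff₀ (hd2 i) (hd js)] at hmax
              rw [show d js * ‖γ js‖⁻¹ * ‖γ (js.succAbove i)‖
                  = (‖γ (js.succAbove i)‖ * d js) * ‖γ js‖⁻¹ from by ring]
              calc (‖γ (js.succAbove i)‖ * d js) * ‖γ js‖⁻¹
                  ≤ (‖γ js‖ * d' i) * ‖γ js‖⁻¹ :=
                    mul_le_mul_of_nonneg_right hmax (inv_nonneg.mpr (norm_nonneg _))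
                _ = d' i := by
                    rw [mul_right_comm, mul_inv_cancel₀ hγpos.ne', one_mul]
      have H' : ∀ g : K →ₗ[F] F, ‖g y₀‖ ≤ ⨆ i, d' i * ‖g (b' i)‖ := by
        intro g
        refine (H g).trans (Real.iSup_le (fun k => ?_)
          (Real.iSup_nonneg fun i => mul_nonneg (hd2 i).le (norm_nonneg _)))
        rcases eq_or_ne k js with heq | hne
        · rw [heq]; exact hkey g
        · obtain ⟨i, rfl⟩ := Fin.exists_succAbove_eq hne
          exact le_ciSup (bdd fun i => d' i * ‖g (b' i)‖) i
      obtain ⟨β', hβ'sum, hβ'⟩ := ih b' d' hd2 y₀ H'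
      set β : Fin (m+1) → F := js.insertNth (0 : F) β' with hβdef
      refine ⟨β, ?_, fun k => ?_⟩
      · have hsplit := Fin.sum_univ_succAbove (fun k => β k • b k) js
        rw [hsplit]
        simpa [hβdef, hb'] using hβ'sum
      · rcases eq_or_ne k js with heq | hne
        · rw [heq]
          simp only [hβdef, Fin.insertNth_apply_same, norm_zero]
          exact (hd js).le
        · obtain ⟨i, rfl⟩ := Fin.exists_succAbove_eq hne
          simpa [hβdef] using hβ' i

/-- If `{x₁, …, xₙ}` is a finite norm-orthogonal system in the ultrametric
normed space `H` (i.e. `‖Σᵢ αᵢ • xᵢ‖ = maxᵢ ‖αᵢ • xᵢ‖` for all scalars), then for any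
`y₁, …, yₙ` in `K` the projective norm satisfies
`‖Σᵢ xᵢ ⊗ yᵢ‖_π = maxᵢ ‖xᵢ‖·‖yᵢ‖`. -/
theorem projNorm_sum_tmul_of_norm_orthogonal
    {F H K : Type*} [NormedField F] [IsUltrametricDist F]
    [NormedAddCommGroup H] [NormedSpace F H] [IsUltrametricDist H]
    [NormedAddCommGroup K] [NormedSpace F K] [IsUltrametricDist K]
    {n : ℕ} (x : Fin n → H)
    (hx : ∀ α : Fin n → F, ‖∑ i, α i • x i‖ = ⨆ i, ‖α i • x i‖)
    (y : Fin n → K) :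
    projNorm (∑ i, x i ⊗ₜ[F] y i) = ⨆ i, ‖x i‖ * ‖y i‖ := by
  have hmem : (⨆ i, ‖x i‖ * ‖y i‖) ∈ {r : ℝ | ∃ (m : ℕ) (a : Fin m → H) (b : Fin m → K),
      (∑ i, x i ⊗ₜ[F] y i) = ∑ j, a j ⊗ₜ[F] b j ∧ r = ⨆ j, ‖a j‖ * ‖b j‖} :=
    ⟨n, x, y, rfl, rfl⟩
  refine le_antisymm (csInf_le ⟨0, fun r hr => ?_⟩ hmem) (le_csInf ⟨_, hmem⟩ ?_)
  · obtain ⟨m, a, b, -, rfl⟩ := hr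
    exact Real.iSup_nonneg fun j => mul_nonneg (norm_nonneg _) (norm_nonneg _)
  rintro r ⟨m, a, b, heq, rfl⟩
  set r := ⨆ j, ‖a j‖ * ‖b j‖ with hrdef
  have hr0 : 0 ≤ r := Real.iSup_nonneg fun j => mul_nonneg (norm_nonneg _) (norm_nonneg _)
  refine Real.iSup_le (fun i₀ => ?_) hr0
  by_contra hlt
  push_neg at hlt
  -- now r < ‖x i₀‖ * ‖y i₀‖
  have hx₀ : 0 < ‖x i₀‖ := by
    rcases (norm_nonneg (x i₀)).lt_or_eq with h | h
    · exact h
    · exfalso; rw [← h] at hlt; simp at hlt; linarith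
  have hy₀ : 0 < ‖y i₀‖ := by
    rcases (norm_nonneg (y i₀)).lt_or_eq with h | h
    · exact h
    · exfalso; rw [← h] at hlt; simp at hlt; linarith
  -- the functional transfer
  have hGnorm : ∀ g : K →ₗ[F] F, ∑ i, g (y i) • x i = ∑ j, g (b j) • a j := by
    intro g
    have hbil : ∀ (c : F) (h₁ h₂ : H) (k₁ k₂ : K), True := fun _ _ _ _ _ => trivial
    let B : H →ₗ[F] K →ₗ[F] H := LinearMap.mk₂ F (fun h k => g k • h)
      (fun h₁ h₂ k => by rw [smul_add])
      (fun c h k => by rw [smul_comm])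
      (fun h k₁ k₂ => by rw [map_add, add_smul])
      (fun c h k => by rw [map_smul, smul_eq_mul, mul_smul])
    have := congrArg (TensorProduct.lift B) heq
    simpa [map_sum, TensorProduct.lift.tmul, B] using this
  -- set up the weights
  set M := ⨆ j, ‖b j‖ with hMdef
  have hM0 : 0 ≤ M := Real.iSup_nonneg fun j => norm_nonneg _
  have hδ : 0 < ‖y i₀‖ - r / ‖x i₀‖ := by
    rw [sub_pos, div_lt_iff₀ hx₀, mul_comm]
    exact hlt
  set δ := ‖y i₀‖ - r / ‖x i₀‖ with hδdef
  set η := δ / (1 + M) with hηdef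
  have hη : 0 < η := div_pos hδ (by linarith)
  set d : Fin m → ℝ := fun j => ‖a j‖ / ‖x i₀‖ + η with hddef
  have hd : ∀ j, 0 < d j := fun j =>
    add_pos_of_nonneg_of_pos (div_nonneg (norm_nonneg _) (norm_nonneg _)) hη
  have hdb : ∀ j, d j * ‖b j‖ < ‖y i₀‖ := by
    intro j
    have h1 : ‖a j‖ * ‖b j‖ ≤ r := le_ciSup (bdd fun j => ‖a j‖ * ‖b j‖) j
    have h2 : ‖b j‖ ≤ M := le_ciSup (bdd fun j => ‖b j‖) j
    have h3 : η * ‖b j‖ ≤ η * M := mul_le_mul_of_nonneg_left h2 hη.le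
    have h4 : η * M < δ := by
      have hM1 : M / (1 + M) < 1 := by
        rw [div_lt_one (by linarith)]; linarith
      calc η * M = δ * (M / (1 + M)) := by rw [hηdef]; ring
        _ < δ * 1 := mul_lt_mul_of_pos_left hM1 hδ
        _ = δ := mul_one δ
    have h5 : ‖a j‖ / ‖x i₀‖ * ‖b j‖ ≤ r / ‖x i₀‖ := by
      rw [div_mul_eq_mul_div, div_eq_mul_inv, div_eq_mul_inv r]
      exact mul_le_mul_of_nonneg_right h1 (inv_nonneg.mpr hx₀.le)
    calc d j * ‖b j‖ = ‖a j‖ / ‖x i₀‖ * ‖b j‖ + η * ‖b j‖ := by rw [hddef]; ring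
      _ ≤ r / ‖x i₀‖ + η * M := add_le_add h5 h3
      _ < r / ‖x i₀‖ + δ := add_lt_add_right h4 _
      _ = ‖y i₀‖ := by rw [hδdef]; ring
  -- the master hypothesis
  have Hm : ∀ g : K →ₗ[F] F, ‖g (y i₀)‖ ≤ ⨆ j, d j * ‖g (b j)‖ := by
    intro g
    have h1 : ‖x i₀‖ * ‖g (y i₀)‖ ≤ ⨆ i, ‖g (y i) • x i‖ := by
      rw [mul_comm, ← norm_smul]
      exact le_ciSup (bdd fun i => ‖g (y i) • x i‖) i₀
    have h2 : (⨆ i, ‖g (y i) • x i‖) = ‖∑ j, g (b j) • a j‖ := by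
      rw [← hx fun i => g (y i), hGnorm g]
    have h3 : ‖∑ j, g (b j) • a j‖ ≤ ⨆ j, ‖g (b j) • a j‖ := norm_sum_le_iSup _
    have h4 : (⨆ j, ‖g (b j) • a j‖) ≤ ‖x i₀‖ * ⨆ j, d j * ‖g (b j)‖ := by
      rw [Real.mul_iSup_of_nonneg hx₀.le]
      refine Real.iSup_le (fun j => ?_)
        (Real.iSup_nonneg fun j => mul_nonneg hx₀.le
          (mul_nonneg (hd j).le (norm_nonneg _)))
      refine le_trans ?_ (le_ciSup (bdd fun j => ‖x i₀‖ * (d j * ‖g (b j)‖)) j)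
      rw [norm_smul]
      have : ‖a j‖ ≤ ‖x i₀‖ * d j := by
        have hXa : ‖x i₀‖ * d j = ‖a j‖ + ‖x i₀‖ * η := by
          rw [hddef]; field_simp
        nlinarith [mul_nonneg hx₀.le hη.le]
      calc ‖g (b j)‖ * ‖a j‖ ≤ ‖g (b j)‖ * (‖x i₀‖ * d j) :=
            mul_le_mul_of_nonneg_left this (norm_nonneg _)
        _ = ‖x i₀‖ * (d j * ‖g (b j)‖) := by ring
    have := le_trans h1 (le_trans (h2.le) (le_trans h3 h4))
    exact le_of_mul_le_mul_left this hx₀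
  obtain ⟨β, hβsum, hβ⟩ := master m b d hd (y i₀) Hm
  -- derive the contradiction
  have hfin : ‖y i₀‖ ≤ ⨆ j, ‖β j • b j‖ := hβsum ▸ norm_sum_le_iSup _
  have hstrict : (⨆ j, ‖β j • b j‖) < ‖y i₀‖ := by
    rcases Nat.eq_zero_or_pos m with rfl | hm
    · rw [Real.iSup_of_isEmpty]; exact hy₀
    · have : Nonempty (Fin m) := ⟨⟨0, hm⟩⟩
      obtain ⟨j₁, hj₁⟩ := Finite.exists_max (fun j => ‖β j • b j‖)
      refine lt_of_le_of_lt (ciSup_le hj₁) ?_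
      calc ‖β j₁ • b j₁‖ = ‖β j₁‖ * ‖b j₁‖ := norm_smul _ _
        _ ≤ d j₁ * ‖b j₁‖ := mul_le_mul_of_nonneg_right (hβ j₁) (norm_nonneg _)
        _ < ‖y i₀‖ := hdb j₁
  exact absurd (lt_of_le_of_lt hfin hstrict) (lt_irrefl _)
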